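/- Let K be a number field in which 2 is either inert or totally ramified, let P be the unique prime ideal of O_K above 2, and let S = {P}. For every solution (λ, μ) of the S-unit equation λ + μ = 1 there exists a solution (λ', μ') of the S-unit equation such that λ' ∈ O_K, μ' is a unit of O_K, and max{|ord_P(λ')|, |ord_P(μ')|} = max{|ord_P(λ)|, |ord_P(μ)|}. -/

import Mathlib

open NumberField IsDedekindDomain

/-- The `v`-adic valuation `ord_v(x) ∈ ℤ` of an element `x` of a number field `K`
(with junk value `0` at `x = 0`). -/
noncomputable def ordK {K : Type*} [Field K] [NumberField K]
    (v : HeightOneSpectrum (𝓞 K)) (x : K) : ℤ :=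
  open scoped Classical in
  if hx : x = 0 then 0
  else -(Multiplicative.toAdd (WithZero.unzero ((v.valuation K).ne_zero_iff.mpr hx)))

/-- `x ∈ K^×` is an `S`-unit: `ord_𝔭(x) = 0` for all primes `𝔭 ∉ S`. -/
def IsSUnit {K : Type*} [Field K] [NumberField K]
    (S : Set (HeightOneSpectrum (𝓞 K))) (x : K) : Prop :=
  x ≠ 0 ∧ ∀ v ∉ S, ordK v x = 0

section helpers

open scoped Classical

variable {K : Type*} [Field K] [NumberField K] (v : HeightOneSpectrum (𝓞 K))

lemma ordK_val {x : K} (hx : x ≠ 0) :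
    v.valuation K x = ((Multiplicative.ofAdd (-ordK v x) : Multiplicative ℤ) :
      WithZero (Multiplicative ℤ)) := by
  rw [ordK, dif_neg hx, neg_neg, ofAdd_toAdd, WithZero.coe_unzero]

lemma ordK_one : ordK v (1 : K) = 0 := by
  have h := ordK_val v (one_ne_zero : (1 : K) ≠ 0)
  rw [map_one, ← WithZero.coe_one] at h
  have h2 := WithZero.coe_inj.mp h.symm
  have h3 := congrArg Multiplicative.toAdd h2
  simp at h3
  omega

lemma ordK_mul {x y : K} (hx : x ≠ 0) (hy : y ≠ 0) :
    ordK v (x * y) = ordK v x + ordK v y := by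
  have h := (v.valuation K).map_mul x y
  rw [ordK_val v (mul_ne_zero hx hy), ordK_val v hx, ordK_val v hy, ← WithZero.coe_mul,
    WithZero.coe_inj, ← ofAdd_add] at h
  have h2 := congrArg Multiplicative.toAdd h
  simp at h2
  omega

lemma ordK_inv (x : K) : ordK v x⁻¹ = -ordK v x := by
  by_cases hx : x = 0
  · simp [hx, ordK]
  · have h := ordK_mul v hx (inv_ne_zero hx)
    rw [mul_inv_cancel₀ hx, ordK_one] at h
    omega

lemma ordK_neg (x : K) : ordK v (-x) = ordK v x := by
  by_cases hx : x = 0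
  · simp [hx]
  · have h1 := ordK_val v hx
    have h2 := ordK_val v (neg_ne_zero.mpr hx)
    rw [Valuation.map_neg, h1, WithZero.coe_inj] at h2
    have h3 := congrArg Multiplicative.toAdd h2
    simp at h3
    omega

lemma ordK_min_le_add {x y : K} (hx : x ≠ 0) (hy : y ≠ 0) (hxy : x + y ≠ 0) :
    min (ordK v x) (ordK v y) ≤ ordK v (x + y) := by
  have h := (v.valuation K).map_add x y
  rw [ordK_val v hx, ordK_val v hy, ordK_val v hxy] at h
  rcases le_max_iff.mp h with h | h <;>
    rw [WithZero.coe_le_coe, Multiplicative.ofAdd_le] at h <;> omega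

lemma val_le_one_of_ordK_nonneg {x : K} (hx : x ≠ 0) (h : 0 ≤ ordK v x) :
    v.valuation K x ≤ 1 := by
  rw [ordK_val v hx, ← WithZero.coe_one, ← ofAdd_zero, WithZero.coe_le_coe,
    Multiplicative.ofAdd_le]
  omega

lemma exists_integer {x : K} (h : ∀ v : HeightOneSpectrum (𝓞 K), v.valuation K x ≤ 1) :
    ∃ y : 𝓞 K, (y : K) = x := by
  obtain ⟨⟨a, s⟩, rfl⟩ := IsLocalization.mk'_surjective (nonZeroDivisors (𝓞 K)) x
  dsimp only at h ⊢
  by_cases ha : a = 0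
  · exact ⟨0, by simp [ha]⟩
  have hs : (s : 𝓞 K) ≠ 0 := nonZeroDivisors.coe_ne_zero s
  have hv : ∀ v : HeightOneSpectrum (𝓞 K), v.intValuationDef a ≤ v.intValuationDef s := by
    intro v
    have h2 := h v
    rw [HeightOneSpectrum.valuation_of_mk'] at h2
    rw [HeightOneSpectrum.intValuation_apply, HeightOneSpectrum.intValuation_apply] at h2
    exact (div_le_one₀ (zero_lt_iff.mpr (v.intValuation_ne_zero' s))).mp h2
  have hdvd : (s : 𝓞 K) ∣ a := by
    rw [← Ideal.mem_span_singleton, ← Ideal.dvd_span_singleton]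
    have hs0 : Ideal.span {(s : 𝓞 K)} ≠ 0 := by
      rw [Ne, Ideal.zero_eq_bot, Ideal.span_singleton_eq_bot]; exact hs
    have ha0 : Ideal.span {a} ≠ 0 := by
      rw [Ne, Ideal.zero_eq_bot, Ideal.span_singleton_eq_bot]; exact ha
    rw [← Associates.mk_le_mk_iff_dvd, ← Associates.factors_le,
      Associates.factors_mk _ hs0, Associates.factors_mk _ ha0]
    rw [WithTop.coe_le_coe, Multiset.le_iff_count]
    rintro ⟨p, hp⟩
    obtain ⟨I, rfl⟩ := Associates.mk_surjective p
    have hIirr : Irreducible I := Associates.irreducible_mk.mp hp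
    have hIprime : Prime I := UniqueFactorizationMonoid.irreducible_iff_prime.mp hIirr
    set v : HeightOneSpectrum (𝓞 K) :=
      ⟨I, Ideal.isPrime_of_prime hIprime, by simpa [Ideal.zero_eq_bot] using hIprime.ne_zero⟩
    have h3 := hv v
    rw [HeightOneSpectrum.intValuationDef_if_neg _ ha,
      HeightOneSpectrum.intValuationDef_if_neg _ hs, WithZero.exp_le_exp,
      neg_le_neg_iff, Nat.cast_le] at h3
    have hva : v.asIdeal = I := rfl
    rw [hva] at h3
    rw [← Associates.count_some hp, ← Associates.count_some hp,
      ← Associates.factors_mk _ hs0, ← Associates.factors_mk _ ha0]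
    exact h3
  obtain ⟨c, hc⟩ := hdvd
  refine ⟨c, ?_⟩
  rw [IsFractionRing.mk'_eq_div, hc]
  push_cast
  rw [mul_comm, mul_div_assoc, div_self (by exact_mod_cast hs), mul_one]

lemma exists_unit {x : K} (hx : x ≠ 0) (h : ∀ v : HeightOneSpectrum (𝓞 K), ordK v x = 0) :
    ∃ u : (𝓞 K)ˣ, ((u : 𝓞 K) : K) = x := by
  obtain ⟨y, hy⟩ := exists_integer (x := x)
    (fun v => val_le_one_of_ordK_nonneg v hx (by rw [h v]))
  obtain ⟨z, hz⟩ := exists_integer (x := x⁻¹)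
    (fun v => val_le_one_of_ordK_nonneg v (inv_ne_zero hx) (by rw [ordK_inv, h v]; norm_num))
  have h1 : y * z = 1 := by
    have h2 : ((y : K)) * z = 1 := by rw [hy, hz, mul_inv_cancel₀ hx]
    exact_mod_cast h2
  exact ⟨⟨y, z, h1, by rw [mul_comm] at h1; exact h1⟩, hy⟩

end helpers

theorem S_unit_solution_normalisation_inert_or_totally_ramified
    (K : Type*) [Field K] [NumberField K]
    (P : HeightOneSpectrum (𝓞 K)) (hP2 : (2 : 𝓞 K) ∈ P.asIdeal)
    (hio : Ideal.span {(2 : 𝓞 K)} = P.asIdeal ∨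
      Ideal.span {(2 : 𝓞 K)} = P.asIdeal ^ Module.finrank ℚ K) :
    ∀ lam mu : K, IsSUnit {P} lam → IsSUnit {P} mu → lam + mu = 1 →
      ∃ lam' mu' : K, IsSUnit {P} lam' ∧ IsSUnit {P} mu' ∧ lam' + mu' = 1 ∧
        (∃ x : 𝓞 K, (x : K) = lam') ∧
        (∃ u : (𝓞 K)ˣ, ((u : 𝓞 K) : K) = mu') ∧
        max |ordK P lam'| |ordK P mu'| = max |ordK P lam| |ordK P mu| := by
  intro lam mu hlam hmu hadd
  obtain ⟨hl0, hlS⟩ := hlam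
  obtain ⟨hm0, hmS⟩ := hmu
  set a := ordK P lam with ha_def
  set b := ordK P mu with hb_def
  -- basic inequalities
  have hmin : min a b ≤ 0 := by
    have := ordK_min_le_add P hl0 hm0 (hadd ▸ one_ne_zero)
    rw [hadd, ordK_one] at this
    exact this
  have hb_ge : min 0 a ≤ b := by
    have := ordK_min_le_add P (one_ne_zero : (1:K) ≠ 0) (neg_ne_zero.mpr hl0)
      (by rw [show (1:K) + -lam = mu by rw [← hadd]; ring]; exact hm0)
    rw [show (1:K) + -lam = mu by rw [← hadd]; ring, ordK_one, ordK_neg] at this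
    exact this
  have ha_ge : min 0 b ≤ a := by
    have := ordK_min_le_add P (one_ne_zero : (1:K) ≠ 0) (neg_ne_zero.mpr hm0)
      (by rw [show (1:K) + -mu = lam by rw [← hadd]; ring]; exact hl0)
    rw [show (1:K) + -mu = lam by rw [← hadd]; ring, ordK_one, ordK_neg] at this
    exact this
  -- helper to conclude for a given candidate pair
  have finish : ∀ lam' mu' : K, lam' ≠ 0 → mu' ≠ 0 →
      (∀ v : HeightOneSpectrum (𝓞 K), v ≠ P → ordK v lam' = 0) →
      (∀ v : HeightOneSpectrum (𝓞 K), ordK v mu' = 0) →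
      0 ≤ ordK P lam' → lam' + mu' = 1 →
      max |ordK P lam'| |ordK P mu'| = max |a| |b| →
      ∃ lam' mu' : K, IsSUnit {P} lam' ∧ IsSUnit {P} mu' ∧ lam' + mu' = 1 ∧
        (∃ x : 𝓞 K, (x : K) = lam') ∧
        (∃ u : (𝓞 K)ˣ, ((u : 𝓞 K) : K) = mu') ∧
        max |ordK P lam'| |ordK P mu'| = max |a| |b| := by
    intro lam' mu' hl' hm' hlS' hmAll hlnn hsum hmax
    refine ⟨lam', mu', ⟨hl', fun v hv => hlS' v (by simpa using hv)⟩,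
      ⟨hm', fun v _ => hmAll v⟩, hsum, ?_, exists_unit hm' hmAll, hmax⟩
    apply exists_integer
    intro v
    by_cases hvP : v = P
    · subst hvP; exact val_le_one_of_ordK_nonneg v hl' hlnn
    · exact val_le_one_of_ordK_nonneg v hl' (by rw [hlS' v hvP])
  rcases lt_or_ge a 0 with ha | ha
  · -- a < 0, show b = a and use (lam⁻¹, -(mu * lam⁻¹))
    have hb : b = a := by omega
    have hml : mu * lam⁻¹ ≠ 0 := mul_ne_zero hm0 (inv_ne_zero hl0)
    apply finish lam⁻¹ (-(mu * lam⁻¹)) (inv_ne_zero hl0) (neg_ne_zero.mpr hml)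
    · intro v hv
      rw [ordK_inv, hlS v (by simpa using hv)]
      ring
    · intro v
      rw [ordK_neg]
      by_cases hvP : v = P
      · rw [hvP, ordK_mul P hm0 (inv_ne_zero hl0), ordK_inv]
        omega
      · rw [ordK_mul v hm0 (inv_ne_zero hl0), ordK_inv, hlS v (by simpa using hvP),
          hmS v (by simpa using hvP)]
        ring
    · rw [ordK_inv]; omega
    · have h1 : lam⁻¹ + -(mu * lam⁻¹) = (1 - mu) * lam⁻¹ := by ring
      rw [h1, show (1:K) - mu = lam by rw [← hadd]; ring, mul_inv_cancel₀ hl0]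
    · have hmu' : ordK P (-(mu * lam⁻¹)) = 0 := by
        rw [ordK_neg, ordK_mul P hm0 (inv_ne_zero hl0), ordK_inv]; omega
      rw [ordK_inv, hmu']
      rw [abs_zero, abs_of_nonneg (by omega : (0:ℤ) ≤ -ordK P lam), abs_of_neg ha,
        abs_of_neg (by omega : b < 0)]
      omega
  · rcases lt_or_ge b 0 with hb | hb
    · exfalso
      omega
    · -- a, b ≥ 0 and min a b ≤ 0, so a = 0 or b = 0
      rcases (by omega : b = 0 ∨ a = 0) with hb0 | ha0
      · apply finish lam mu hl0 hm0 (fun v hv => hlS v (by simpa using hv)) ?_ ha hadd rfl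
        intro v
        by_cases hvP : v = P
        · subst hvP; omega
        · exact hmS v (by simpa using hvP)
      · apply finish mu lam hm0 hl0 (fun v hv => hmS v (by simpa using hv)) ?_ hb
          (by rw [add_comm]; exact hadd) (max_comm _ _)
        intro v
        by_cases hvP : v = P
        · subst hvP; omega
        · exact hlS v (by simpa using hvP)
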